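/- arXiv:2308.01358 — 4 statements merged into one kernel-verified Lean document; each statement's English description precedes it below -/
import Mathlib

section
/- The 1-quantization operator satisfies the variance bound E[‖C_q(z) − z‖²] ≤ √d · ‖z‖² for every z in R^d. -/
open MeasureTheory ProbabilityTheory

/-- The 1-quantization operator `C_q(z)_i = ‖z‖ · sign(z_i) · χ_i` with independent
Bernoulli(`|z_i|/‖z‖`) coordinates satisfies the variance bound
`E[‖C_q(z) − z‖²] ≤ √d · ‖z‖²`. -/
theorem quantization_variance_bound {Ω : Type*} [MeasurableSpace Ω]
    (μ : Measure Ω) [IsProbabilityMeasure μ]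
    (d : ℕ) (z : EuclideanSpace ℝ (Fin d)) (χ : Fin d → Ω → ℝ)
    (hmeas : ∀ i, Measurable (χ i))
    (hval : ∀ i ω, χ i ω = 0 ∨ χ i ω = 1)
    (hindep : iIndepFun χ μ)
    (hmean : ∀ i, ∫ ω, χ i ω ∂μ = |z i| / ‖z‖) :
    ∫ ω, ∑ i, (‖z‖ * Real.sign (z i) * χ i ω - z i) ^ 2 ∂μ ≤ Real.sqrt d * ‖z‖ ^ 2 := by
  have hnn : (0:ℝ) ≤ ‖z‖ := norm_nonneg z
  have hχint : ∀ i, Integrable (χ i) μ := by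
    intro i
    refine (integrable_const (1:ℝ)).mono' (hmeas i).aestronglyMeasurable ?_
    filter_upwards with ω
    rcases hval i ω with h | h <;> simp [h]
  have hsq : ∀ i ω, (χ i ω) ^ 2 = χ i ω := by
    intro i ω; rcases hval i ω with h | h <;> simp [h]
  have hsign : ∀ i, Real.sign (z i) * z i = |z i| := by
    intro i
    rcases lt_trichotomy (z i) 0 with h | h | h
    · rw [Real.sign_of_neg h, abs_of_neg h]; ring
    · simp [h]
    · rw [Real.sign_of_pos h, abs_of_pos h]; ring
  have hsign2 : ∀ i, (Real.sign (z i)) ^ 2 * |z i| = |z i| := by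
    intro i
    rcases lt_trichotomy (z i) 0 with h | h | h
    · rw [Real.sign_of_neg h]; ring
    · simp [h]
    · rw [Real.sign_of_pos h]; ring
  -- per-coordinate integral
  have key : ∀ i, ∫ ω, (‖z‖ * Real.sign (z i) * χ i ω - z i) ^ 2 ∂μ
      ≤ ‖z‖ * |z i| := by
    intro i
    have hptw : ∀ ω, (‖z‖ * Real.sign (z i) * χ i ω - z i) ^ 2
        = ((‖z‖ * Real.sign (z i)) ^ 2 - 2 * (‖z‖ * Real.sign (z i)) * z i) * χ i ω
          + (z i) ^ 2 := by
      intro ω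
      linear_combination (‖z‖ * Real.sign (z i)) ^ 2 * (hsq i ω)
    calc ∫ ω, (‖z‖ * Real.sign (z i) * χ i ω - z i) ^ 2 ∂μ
        = ((‖z‖ * Real.sign (z i)) ^ 2 - 2 * (‖z‖ * Real.sign (z i)) * z i)
            * (|z i| / ‖z‖) + (z i) ^ 2 := by
          simp_rw [hptw]
          rw [integral_add ((hχint i).const_mul _) (integrable_const _),
            integral_const_mul, hmean i, integral_const]
          simp
      _ ≤ ‖z‖ * |z i| := by
          by_cases hz : ‖z‖ = 0
          · have hz0 : z = 0 := norm_eq_zero.mp hz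
            have : z i = 0 := by simp [hz0]
            simp [hz, this]
          · have hzpos : (0:ℝ) < ‖z‖ := lt_of_le_of_ne hnn (Ne.symm hz)
            have h1 := hsign i
            have h2 := hsign2 i
            have habs : |z i| ^ 2 = (z i) ^ 2 := sq_abs _
            have hval' : ((‖z‖ * Real.sign (z i)) ^ 2
                - 2 * (‖z‖ * Real.sign (z i)) * z i) * (|z i| / ‖z‖) + (z i) ^ 2
                = ‖z‖ * |z i| - (z i) ^ 2 := by
              field_simp
              linear_combination ‖z‖ * h2 - 2 * |z i| * h1 - 2 * habs
            rw [hval']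
            nlinarith [sq_nonneg (z i)]
  -- sum it up
  have hint : ∀ i, Integrable (fun ω => (‖z‖ * Real.sign (z i) * χ i ω - z i) ^ 2) μ := by
    intro i
    have : (fun ω => (‖z‖ * Real.sign (z i) * χ i ω - z i) ^ 2)
        = fun ω => ((‖z‖ * Real.sign (z i)) ^ 2 - 2 * (‖z‖ * Real.sign (z i)) * z i) * χ i ω
          + (z i) ^ 2 := by
      funext ω
      linear_combination (‖z‖ * Real.sign (z i)) ^ 2 * (hsq i ω)
    rw [this]
    exact ((hχint i).const_mul _).add (integrable_const _)
  rw [integral_finset_sum _ (fun i _ => hint i)]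
  have hl1 : ∑ i, |z i| ≤ Real.sqrt d * ‖z‖ := by
    have hcs : (∑ i, |z i|) ^ 2 ≤ (d : ℝ) * ∑ i, |z i| ^ 2 := by
      have := sq_sum_le_card_mul_sum_sq (s := (Finset.univ : Finset (Fin d)))
        (f := fun i => |z i|)
      simpa using this
    have hnorm : ‖z‖ = Real.sqrt (∑ i, |z i| ^ 2) := by
      simp [EuclideanSpace.norm_eq, Real.norm_eq_abs]
    have hsum_nn : (0:ℝ) ≤ ∑ i, |z i| := Finset.sum_nonneg fun i _ => abs_nonneg _
    have hsumsq_nn : (0:ℝ) ≤ ∑ i, |z i| ^ 2 :=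
      Finset.sum_nonneg fun i _ => sq_nonneg _
    rw [hnorm, ← Real.sqrt_mul (Nat.cast_nonneg d)]
    exact (Real.le_sqrt hsum_nn (by positivity)).mpr hcs
  calc ∑ i, ∫ ω, (‖z‖ * Real.sign (z i) * χ i ω - z i) ^ 2 ∂μ
      ≤ ∑ i, ‖z‖ * |z i| := Finset.sum_le_sum fun i _ => key i
    _ = ‖z‖ * ∑ i, |z i| := by rw [Finset.mul_sum]
    _ ≤ ‖z‖ * (Real.sqrt d * ‖z‖) := by
        exact mul_le_mul_of_nonneg_left hl1 hnn
    _ = Real.sqrt d * ‖z‖ ^ 2 := by ring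
end

section
/- For the rand-h operator C_{rd,h}(z) = (d/h)·B(S) ⊙ z with S uniformly distributed over the h-element subsets of {1,...,d} and B(S)_i = 1_{i ∈ S}, and a random vector E with second-moment M independent of S, one has E[C_{rd,h}(E)⊗C_{rd,h}(E)] = (d(h−1))/(h(d−1))·M + (d/h)·(1 − (h−1)/(d−1))·Diag(M). -/
open MeasureTheory ProbabilityTheory

lemma count_aux {d h : ℕ} (t : Finset (Fin d)) (ht : t.card ≤ h) :
    (Finset.univ.filter (fun s : Finset (Fin d) => s.card = h ∧ t ⊆ s)).card
      = (d - t.card).choose (h - t.card) := by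
  have hc : tᶜ.card = d - t.card := by
    simp [Finset.card_compl]
  rw [← hc, ← Finset.card_powersetCard]
  apply Finset.card_nbij' (fun s => s \ t) (fun s => s ∪ t)
  · intro s hs
    simp only [Finset.mem_coe, Finset.mem_filter, Finset.mem_univ, true_and] at hs
    rw [Finset.mem_coe, Finset.mem_powersetCard]
    constructor
    · intro x hx
      simp only [Finset.mem_sdiff] at hx
      simp [Finset.mem_compl, hx.2]
    · rw [Finset.card_sdiff_of_subset hs.2, hs.1]
  · intro s hs
    rw [Finset.mem_coe, Finset.mem_powersetCard] at hs
    simp only [Finset.mem_coe, Finset.mem_filter, Finset.mem_univ, true_and]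
    have hdisj : Disjoint s t := by
      rw [Finset.disjoint_right]
      intro a hat has
      have := hs.1 has
      simp [Finset.mem_compl] at this
      exact this hat
    constructor
    · rw [Finset.card_union_of_disjoint hdisj, hs.2]
      omega
    · exact Finset.subset_union_right
  · intro s hs
    simp only [Finset.mem_coe, Finset.mem_filter, Finset.mem_univ, true_and] at hs
    exact Finset.sdiff_union_of_subset hs.2
  · intro s hs
    rw [Finset.mem_coe, Finset.mem_powersetCard] at hs
    have hdisj : Disjoint s t := by
      rw [Finset.disjoint_right]
      intro a hat has
      have := hs.1 has
      simp [Finset.mem_compl] at this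
      exact this hat
    exact Finset.union_sdiff_cancel_right hdisj

/-- For the rand-`h` operator `C_{rd,h}(z) = (d/h) · B(S) ⊙ z` with `S` uniform over the
`h`-element subsets of `{1,…,d}` and `B(S)_i = 1_{i ∈ S}`, and a random vector `E` with
second-moment matrix `M` independent of `S`, one has
`E[C_{rd,h}(E) ⊗ C_{rd,h}(E)] = (d(h−1))/(h(d−1)) · M + (d/h)(1 − (h−1)/(d−1)) · Diag M`. -/
theorem randh_second_moment {Ω : Type*} [MeasurableSpace Ω]
    (μ : Measure Ω) [IsProbabilityMeasure μ]
    (d h : ℕ) (hh1 : 1 ≤ h) (hhd : h ≤ d)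
    (S : Ω → Finset (Fin d)) (X : Ω → Fin d → ℝ) (M : Matrix (Fin d) (Fin d) ℝ)
    (hcard : ∀ ω, (S ω).card = h)
    (hmeasS : ∀ s : Finset (Fin d), MeasurableSet {ω | S ω = s})
    (hunif : ∀ s : Finset (Fin d), s.card = h →
      μ {ω | S ω = s} = ((d.choose h : ENNReal))⁻¹)
    (hmX : Measurable X)
    (hindep : IndepFun (fun ω => fun i => if i ∈ S ω then (1 : ℝ) else 0) X μ)
    (hM : ∀ i j, ∫ ω, X ω i * X ω j ∂μ = M i j)
    (hint : ∀ i j, Integrable (fun ω => X ω i * X ω j) μ) :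
    ∀ i j, ∫ ω, (((d : ℝ) / h) * (if i ∈ S ω then 1 else 0) * X ω i) *
                (((d : ℝ) / h) * (if j ∈ S ω then 1 else 0) * X ω j) ∂μ
      = ((d : ℝ) * ((h : ℝ) - 1)) / ((h : ℝ) * ((d : ℝ) - 1)) * M i j
        + ((d : ℝ) / h) * (1 - ((h : ℝ) - 1) / ((d : ℝ) - 1)) *
          (if i = j then M i i else 0) := by
  intro i j
  have hd1 : 1 ≤ d := le_trans hh1 hhd
  -- the indicator pair set
  set A : Set Ω := {ω | i ∈ S ω ∧ j ∈ S ω} with hA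
  set F : Finset (Finset (Fin d)) :=
    Finset.univ.filter (fun s : Finset (Fin d) => s.card = h ∧ ({i, j} : Finset (Fin d)) ⊆ s)
    with hF
  have hAeq : A = ⋃ s ∈ F, {ω | S ω = s} := by
    ext ω
    simp only [hA, hF, Set.mem_setOf_eq, Set.mem_iUnion, Finset.mem_filter, Finset.mem_univ,
      true_and, Finset.insert_subset_iff, Finset.singleton_subset_iff]
    constructor
    · rintro ⟨hi, hj⟩
      exact ⟨S ω, ⟨hcard ω, hi, hj⟩, rfl⟩
    · rintro ⟨s, ⟨_, hi, hj⟩, rfl⟩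
      exact ⟨hi, hj⟩
  have hAmeas : MeasurableSet A := by
    rw [hAeq]
    exact F.measurableSet_biUnion (fun s _ => hmeasS s)
  have hμA : μ A = (F.card : ENNReal) * ((d.choose h : ENNReal))⁻¹ := by
    rw [hAeq, measure_biUnion_finset ?disj (fun s _ => hmeasS s)]
    · rw [Finset.sum_congr rfl (fun s hs => hunif s (by
        simp only [hF, Finset.mem_filter] at hs; exact hs.2.1))]
      simp [mul_comm]
    case disj =>
      intro s hs s' hs' hne
      simp only [Function.onFun, Set.disjoint_left]
      rintro ω (rfl : S ω = s) (rfl : S ω = s')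
      exact hne rfl
  -- indicator functions
  have hBf : (fun ω => (if i ∈ S ω then (1:ℝ) else 0) * (if j ∈ S ω then (1:ℝ) else 0))
      = A.indicator (fun _ => (1:ℝ)) := by
    funext ω
    by_cases hi : i ∈ S ω <;> by_cases hj : j ∈ S ω <;>
      simp [hA, Set.indicator, hi, hj]
  have hintB : ∫ ω, (if i ∈ S ω then (1:ℝ) else 0) * (if j ∈ S ω then (1:ℝ) else 0) ∂μ
      = (μ A).toReal := by
    rw [hBf, integral_indicator_const (1:ℝ) hAmeas]
    simp
    rfl
  -- independence
  have hφ : Measurable (fun v : Fin d → ℝ => v i * v j) :=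
    (measurable_pi_apply i).mul (measurable_pi_apply j)
  have hind2 : IndepFun (fun ω => (if i ∈ S ω then (1:ℝ) else 0) * (if j ∈ S ω then (1:ℝ) else 0))
      (fun ω => X ω i * X ω j) μ := hindep.comp hφ hφ
  have hmB : AEStronglyMeasurable
      (fun ω => (if i ∈ S ω then (1:ℝ) else 0) * (if j ∈ S ω then (1:ℝ) else 0)) μ := by
    rw [hBf]
    exact ((stronglyMeasurable_const).indicator hAmeas).aestronglyMeasurable
  have hsplit : ∫ ω, (((d : ℝ) / h) * (if i ∈ S ω then 1 else 0) * X ω i) *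
                (((d : ℝ) / h) * (if j ∈ S ω then 1 else 0) * X ω j) ∂μ
      = ((d : ℝ) / h) * ((d : ℝ) / h) * ((μ A).toReal * M i j) := by
    have heq : (fun ω => (((d : ℝ) / h) * (if i ∈ S ω then (1:ℝ) else 0) * X ω i) *
                (((d : ℝ) / h) * (if j ∈ S ω then 1 else 0) * X ω j))
        = fun ω => ((d : ℝ) / h) * ((d : ℝ) / h) *
            (((if i ∈ S ω then (1:ℝ) else 0) * (if j ∈ S ω then (1:ℝ) else 0)) *
              (X ω i * X ω j)) := by
      funext ω; ring
    rw [heq, integral_const_mul]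
    congr 1
    have h2 : ∫ ω, ((if i ∈ S ω then (1:ℝ) else 0) * (if j ∈ S ω then (1:ℝ) else 0))
          * (X ω i * X ω j) ∂μ
        = (∫ ω, (if i ∈ S ω then (1:ℝ) else 0) * (if j ∈ S ω then (1:ℝ) else 0) ∂μ)
          * ∫ ω, X ω i * X ω j ∂μ :=
      hind2.integral_mul_eq_mul_integral hmB ((hint i j).aestronglyMeasurable)
    rw [h2, hintB, hM]
  rw [hsplit]
  -- compute F.card and (μ A).toReal
  have hCne : (d.choose h : ℝ) ≠ 0 :=
    Nat.cast_ne_zero.mpr (Nat.choose_pos hhd).ne'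
  have hμAr : (μ A).toReal = (F.card : ℝ) / (d.choose h : ℝ) := by
    rw [hμA]
    rw [ENNReal.toReal_mul]
    rw [ENNReal.toReal_inv]
    simp [div_eq_mul_inv]
  rw [hμAr]
  have hhne : (h : ℝ) ≠ 0 := Nat.cast_ne_zero.mpr (by omega)
  by_cases hij : i = j
  · -- diagonal case
    subst hij
    simp only [if_pos rfl]
    have hFcard : F.card = (d-1).choose (h-1) := by
      rw [hF]
      have : ({i, i} : Finset (Fin d)) = {i} := by simp
      rw [this]
      have := count_aux ({i} : Finset (Fin d)) (by simpa using hh1)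
      simpa using this
    rw [hFcard]
    -- d * C(d-1,h-1) = h * C(d,h)
    have hnat : d * (d-1).choose (h-1) = d.choose h * h := by
      have := Nat.add_one_mul_choose_eq (d-1) (h-1)
      rwa [show d-1+1 = d by omega, show h-1+1 = h by omega] at this
    have hnatr : (d : ℝ) * ((d-1).choose (h-1) : ℝ) = (d.choose h : ℝ) * h := by
      exact_mod_cast congrArg (Nat.cast (R := ℝ)) hnat
    -- goal algebra
    set m := M i i with hm
    clear_value m
    rcases Nat.lt_or_ge d 2 with hd2 | hd2
    · -- d = 1, hence h = 1
      have hde : d = 1 := by omega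
      have hhe : h = 1 := by omega
      rw [hde, hhe]
      norm_num
    · have hdne : (d : ℝ) - 1 ≠ 0 := by
        have : (2:ℝ) ≤ d := by exact_mod_cast hd2
        linarith
      field_simp
      rw [if_pos trivial]
      linear_combination (m * ((d:ℝ) - 1)) * hnatr
  · -- off-diagonal
    simp only [if_neg hij]
    have hijcard : ({i, j} : Finset (Fin d)).card = 2 := by
      rw [Finset.card_insert_of_notMem (by simpa using hij), Finset.card_singleton]
    rcases Nat.lt_or_ge h 2 with hh2 | hh2
    · -- h = 1 : F empty
      interval_cases h
      have hF0 : F = ∅ := by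
        rw [hF, Finset.filter_eq_empty_iff]
        intro s _
        rintro ⟨hc1, hsub⟩
        have := Finset.card_le_card hsub
        rw [hijcard, hc1] at this
        omega
      rw [hF0]
      norm_num
    · have hd2 : 2 ≤ d := le_trans hh2 hhd
      have hFcard : F.card = (d-2).choose (h-2) := by
        rw [hF, count_aux _ (by rw [hijcard]; exact hh2), hijcard]
      rw [hFcard]
      -- d*(d-1)*C(d-2,h-2) = h*(h-1)*C(d,h)
      have hnat1 : d * (d-1).choose (h-1) = d.choose h * h := by
        have := Nat.add_one_mul_choose_eq (d-1) (h-1)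
        rwa [show d-1+1 = d by omega, show h-1+1 = h by omega] at this
      have hnat2 : (d-1) * (d-2).choose (h-2) = (d-1).choose (h-1) * (h-1) := by
        have := Nat.add_one_mul_choose_eq (d-2) (h-2)
        have e1 : (d-2)+1 = d-1 := by omega
        have e2 : (h-2)+1 = h-1 := by omega
        rwa [e1, e2] at this
      have hr1 : (d : ℝ) * ((d-1).choose (h-1) : ℝ) = (d.choose h : ℝ) * h := by
        exact_mod_cast congrArg (Nat.cast (R := ℝ)) hnat1
      have hr2 : ((d:ℝ) - 1) * ((d-2).choose (h-2) : ℝ) = ((d-1).choose (h-1) : ℝ) * ((h:ℝ) - 1) := by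
        have := congrArg (Nat.cast (R := ℝ)) hnat2
        push_cast [Nat.cast_sub hd1, Nat.cast_sub hh1] at this
        convert this using 2 <;> push_cast <;> ring
      have hr3 : (d:ℝ) * ((d:ℝ) - 1) * ((d-2).choose (h-2) : ℝ)
          = (d.choose h : ℝ) * h * ((h:ℝ) - 1) := by
        linear_combination (d:ℝ) * hr2 + ((h:ℝ) - 1) * hr1
      have hdne : (d : ℝ) - 1 ≠ 0 := by
        have : (2:ℝ) ≤ d := by exact_mod_cast hd2
        linarith
      set m := M i j with hm
      clear_value m
      field_simp
      linear_combination m * hr3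
end

section
/- Let H be a symmetric positive definite d×d matrix, γ > 0 with γH ≼ I, and η_0 ∈ R^d. Define η_k = (I − γH)^k η_0 and the average η̄_{K−1} = (1/K)Σ_{k=0}^{K−1} η_k. Then ⟨η̄_{K−1}, H η̄_{K−1}⟩ ≤ ‖H^{−1/2} η_0‖² / (γ² K²). -/
open Matrix

open scoped ComplexOrder in
/-- The square root of a positive semidefinite matrix, as defined in Mathlib (Dec 2024). -/
noncomputable def Matrix.PosSemidef.sqrt {n 𝕜 : Type*} [Fintype n] [RCLike 𝕜] [DecidableEq n]
    {A : Matrix n n 𝕜} (hA : A.PosSemidef) : Matrix n n 𝕜 :=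
  (hA.1.eigenvectorUnitary : Matrix n n 𝕜) * diagonal ((↑) ∘ (√·) ∘ hA.1.eigenvalues) *
    (star hA.1.eigenvectorUnitary : Matrix n n 𝕜)

lemma psd_sqrt_mul_self {d : ℕ} {A : Matrix (Fin d) (Fin d) ℝ} (hA : A.PosSemidef) :
    hA.sqrt * hA.sqrt = A := by
  set U : Matrix (Fin d) (Fin d) ℝ := (hA.1.eigenvectorUnitary : Matrix (Fin d) (Fin d) ℝ) with hU
  have hUU : star U * U = 1 := Matrix.mem_unitaryGroup_iff'.mp hA.1.eigenvectorUnitary.2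
  have hspec : A = U * diagonal (RCLike.ofReal ∘ hA.1.eigenvalues) * star U := by
    have := hA.1.spectral_theorem
    simpa using this
  unfold Matrix.PosSemidef.sqrt
  rw [← hU]
  calc U * diagonal ((↑) ∘ (√·) ∘ hA.1.eigenvalues) * star U *
        (U * diagonal ((↑) ∘ (√·) ∘ hA.1.eigenvalues) * star U)
      = U * (diagonal ((↑) ∘ (√·) ∘ hA.1.eigenvalues) * (star U * U) *
        diagonal ((↑) ∘ (√·) ∘ hA.1.eigenvalues)) * star U := by simp only [Matrix.mul_assoc]
    _ = U * diagonal (RCLike.ofReal ∘ hA.1.eigenvalues) * star U := by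
        rw [hUU, Matrix.mul_one, diagonal_mul_diagonal]
        congr 2
        congr 1
        funext i
        simp [Function.comp, Real.mul_self_sqrt (hA.eigenvalues_nonneg i)]
    _ = A := hspec.symm

lemma psd_sqrt_transpose {d : ℕ} {A : Matrix (Fin d) (Fin d) ℝ} (hA : A.PosSemidef) :
    (hA.sqrt)ᵀ = hA.sqrt := by
  unfold Matrix.PosSemidef.sqrt
  rw [star_eq_conjTranspose, conjTranspose_eq_transpose_of_trivial, transpose_mul, transpose_mul,
    transpose_transpose, diagonal_transpose, Matrix.mul_assoc]

lemma eig_le_one (d : ℕ) (A : Matrix (Fin d) (Fin d) ℝ) (hA : A.PosSemidef)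
    (hA1 : ((1 : Matrix (Fin d) (Fin d) ℝ) - A).PosSemidef) (i : Fin d) :
    hA.1.eigenvalues i ≤ 1 := by
  set v : Fin d → ℝ := ⇑(hA.1.eigenvectorBasis i) with hv
  have hdot : v ⬝ᵥ v = 1 := by
    have h1 : ‖hA.1.eigenvectorBasis i‖ = 1 := hA.1.eigenvectorBasis.orthonormal.1 i
    have h2 : (inner ℝ (hA.1.eigenvectorBasis i) (hA.1.eigenvectorBasis i) : ℝ) = 1 := by
      rw [real_inner_self_eq_norm_sq, h1]; norm_num
    rw [EuclideanSpace.inner_eq_star_dotProduct] at h2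
    simpa [star_trivial] using h2
  have h3 := hA1.dotProduct_mulVec_nonneg v
  rw [sub_mulVec, one_mulVec, hv, hA.1.mulVec_eigenvectorBasis] at h3
  simp only [star_trivial, dotProduct_sub, dotProduct_smul, smul_eq_mul, ← hv, hdot] at h3
  linarith

lemma mulVec_dot (d : ℕ) (A : Matrix (Fin d) (Fin d) ℝ) (x y : Fin d → ℝ) :
    (A *ᵥ x) ⬝ᵥ y = x ⬝ᵥ (Aᵀ *ᵥ y) := by
  rw [mulVec_transpose, dotProduct_comm, dotProduct_mulVec, dotProduct_comm]

lemma contraction (d K : ℕ) (A : Matrix (Fin d) (Fin d) ℝ) (hA : A.PosSemidef)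
    (hA1 : ((1 : Matrix (Fin d) (Fin d) ℝ) - A).PosSemidef) (x : Fin d → ℝ) :
    (((1 : Matrix (Fin d) (Fin d) ℝ) - A ^ K) *ᵥ x) ⬝ᵥ (((1 : Matrix (Fin d) (Fin d) ℝ) - A ^ K) *ᵥ x)
      ≤ x ⬝ᵥ x := by
  set V := (hA.1.eigenvectorUnitary : Matrix (Fin d) (Fin d) ℝ) with hV
  set μ := hA.1.eigenvalues with hμ
  have hVV : Vᵀ * V = 1 := by
    have := (Matrix.mem_unitaryGroup_iff'.mp hA.1.eigenvectorUnitary.2)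
    simpa [star_eq_conjTranspose] using this
  have hVV' : V * Vᵀ = 1 := by
    have := (Matrix.mem_unitaryGroup_iff.mp hA.1.eigenvectorUnitary.2)
    simpa [star_eq_conjTranspose] using this
  have hortho : ∀ a b : Fin d → ℝ, (V *ᵥ a) ⬝ᵥ (V *ᵥ b) = a ⬝ᵥ b := by
    intro a b
    rw [mulVec_dot, mulVec_mulVec, hVV, one_mulVec]
  have hspec : A = V * diagonal μ * Vᵀ := by
    have := hA.1.spectral_theorem
    simpa [star_eq_conjTranspose, Function.comp] using this
  have key : ∀ n : ℕ, (V * diagonal μ * Vᵀ) ^ n = V * diagonal (fun i => μ i ^ n) * Vᵀ := by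
    intro n
    induction n with
    | zero =>
      simp only [pow_zero]
      rw [diagonal_one, mul_one, hVV']
    | succ n ih =>
      rw [pow_succ, ih]
      calc V * diagonal (fun i => μ i ^ n) * Vᵀ * (V * diagonal μ * Vᵀ)
          = V * diagonal (fun i => μ i ^ n) * (Vᵀ * V) * diagonal μ * Vᵀ := by
            simp only [Matrix.mul_assoc]
        _ = V * (diagonal (fun i => μ i ^ n) * diagonal μ) * Vᵀ := by
            rw [hVV]; simp only [Matrix.mul_assoc, Matrix.mul_one]
        _ = V * diagonal (fun i => μ i ^ (n + 1)) * Vᵀ := by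
            have he : (fun i => μ i ^ n * μ i) = fun i => μ i ^ (n+1) := by
              funext i; rw [pow_succ]
            rw [diagonal_mul_diagonal, he]
  have hpow : (1 : Matrix (Fin d) (Fin d) ℝ) - A ^ K
      = V * diagonal (fun i => 1 - μ i ^ K) * Vᵀ := by
    have h1 : (1 : Matrix (Fin d) (Fin d) ℝ) = V * diagonal (fun _ : Fin d => (1:ℝ)) * Vᵀ := by
      rw [diagonal_one, mul_one, hVV']
    rw [hspec, key, h1]
    rw [← Matrix.sub_mul, ← Matrix.mul_sub, diagonal_sub]
  -- now compute the dot products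
  set g : Fin d → ℝ := fun i => 1 - μ i ^ K with hg
  set c : Fin d → ℝ := Vᵀ *ᵥ x with hc
  have hx : x = V *ᵥ c := by
    rw [hc, mulVec_mulVec, hVV', one_mulVec]
  have hMx : ((1 : Matrix (Fin d) (Fin d) ℝ) - A ^ K) *ᵥ x = V *ᵥ (diagonal g *ᵥ c) := by
    rw [hpow, ← mulVec_mulVec, ← mulVec_mulVec, hc]
  rw [hMx, hortho]
  conv_rhs => rw [hx, hortho]
  -- coordinatewise bound
  rw [dotProduct, dotProduct]
  apply Finset.sum_le_sum
  intro i _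
  have hgi0 : 0 ≤ g i := by
    rw [hg]
    simp only [sub_nonneg]
    exact pow_le_one₀ (hA.eigenvalues_nonneg i) (eig_le_one d A hA hA1 i)
  have hgi1 : g i ≤ 1 := by
    rw [hg]
    simp only [sub_le_self_iff]
    exact pow_nonneg (hA.eigenvalues_nonneg i) K
  rw [mulVec_diagonal]
  calc g i * c i * (g i * c i) = (g i * g i) * (c i * c i) := by ring
    _ ≤ 1 * (c i * c i) := by
        apply mul_le_mul_of_nonneg_right _ (mul_self_nonneg _)
        nlinarith
    _ = c i * c i := one_mul _

lemma dot_mulVec' (d : ℕ) (A : Matrix (Fin d) (Fin d) ℝ) (x y : Fin d → ℝ) :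
    x ⬝ᵥ (A *ᵥ y) = (Aᵀ *ᵥ x) ⬝ᵥ y := by
  rw [mulVec_dot, transpose_transpose]

lemma sum_mulVec' (d K : ℕ) (f : ℕ → Matrix (Fin d) (Fin d) ℝ) (v : Fin d → ℝ) :
    (∑ k ∈ Finset.range K, f k) *ᵥ v = ∑ k ∈ Finset.range K, f k *ᵥ v := by
  ext i
  simp only [mulVec, dotProduct, Matrix.sum_apply, Finset.sum_apply, Finset.sum_mul]
  rw [Finset.sum_comm]

/-- Let `H` be symmetric positive definite, `γ > 0` with `γH ≼ I`, and `η₀ ∈ ℝ^d`.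
With `η_k = (I − γH)^k η₀` and `η̄_{K−1} = (1/K) Σ_{k=0}^{K−1} η_k`, one has
`⟨η̄_{K−1}, H η̄_{K−1}⟩ ≤ ‖H^{−1/2} η₀‖² / (γ² K²)`. -/
theorem averaged_gd_initial_condition_bound (d : ℕ) (H : Matrix (Fin d) (Fin d) ℝ)
    (γ : ℝ) (η₀ : Fin d → ℝ) (hH : H.PosDef) (hγ : 0 < γ)
    (hI : ((1 : Matrix (Fin d) (Fin d) ℝ) - γ • H).PosSemidef)
    (K : ℕ) (hK : 1 ≤ K) :
    ((K : ℝ)⁻¹ • ∑ k ∈ Finset.range K,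
        (((1 : Matrix (Fin d) (Fin d) ℝ) - γ • H) ^ k) *ᵥ η₀) ⬝ᵥ
      (H *ᵥ ((K : ℝ)⁻¹ • ∑ k ∈ Finset.range K,
        (((1 : Matrix (Fin d) (Fin d) ℝ) - γ • H) ^ k) *ᵥ η₀))
    ≤ ((hH.inv.posSemidef.sqrt *ᵥ η₀) ⬝ᵥ (hH.inv.posSemidef.sqrt *ᵥ η₀))
        / (γ ^ 2 * (K : ℝ) ^ 2) := by
  set A : Matrix (Fin d) (Fin d) ℝ := 1 - γ • H with hAdef
  set S : Matrix (Fin d) (Fin d) ℝ := ∑ k ∈ Finset.range K, A ^ k with hSdef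
  set M : Matrix (Fin d) (Fin d) ℝ := 1 - A ^ K with hMdef
  set R : Matrix (Fin d) (Fin d) ℝ := hH.inv.posSemidef.sqrt with hRdef
  have hdet : IsUnit H.det := hH.det_pos.ne'.isUnit
  have hHiH : H⁻¹ * H = 1 := Matrix.nonsing_inv_mul H hdet
  have hHHi : H * H⁻¹ = 1 := Matrix.mul_nonsing_inv H hdet
  -- symmetry facts
  have hHsym : Hᵀ = H := hH.1
  have hAsym : Aᵀ = A := by rw [hAdef]; rw [transpose_sub, transpose_one, transpose_smul, hHsym]
  have hSsym : Sᵀ = S := by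
    rw [hSdef, transpose_sum]
    exact Finset.sum_congr rfl fun k _ => by rw [transpose_pow, hAsym]
  have hMsym : Mᵀ = M := by rw [hMdef, transpose_sub, transpose_one, transpose_pow, hAsym]
  have hRR : R * R = H⁻¹ := psd_sqrt_mul_self hH.inv.posSemidef
  have hRsym : Rᵀ = R := psd_sqrt_transpose hH.inv.posSemidef
  -- commutation
  have cRHi : R * H⁻¹ = H⁻¹ * R := by rw [← hRR, Matrix.mul_assoc]
  have cRH : R * H = H * R := by
    have h1 : H * (R * H⁻¹) * H = H * (H⁻¹ * R) * H := by rw [cRHi]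
    calc R * H = (H * H⁻¹) * R * H := by rw [hHHi, Matrix.one_mul]
      _ = H * (H⁻¹ * R) * H := by simp only [Matrix.mul_assoc]
      _ = H * (R * H⁻¹) * H := by rw [cRHi]
      _ = H * R * (H⁻¹ * H) := by simp only [Matrix.mul_assoc]
      _ = H * R := by rw [hHiH, Matrix.mul_one]
  have cRA : Commute R A := by
    rw [hAdef]
    have cRH' : Commute R H := cRH
    exact (Commute.one_right R).sub_right (cRH'.smul_right γ)
  have cRM : Commute R M := (Commute.one_right R).sub_right (cRA.pow_right K)
  have cHA : Commute H A := by
    rw [hAdef]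
    exact (Commute.one_right H).sub_right (Commute.smul_right (Commute.refl H) γ)
  have cAS : Commute A S := Commute.sum_right _ _ _ fun k _ => (Commute.refl A).pow_right k
  -- geometric sum
  have hgeom : γ • (H * S) = M := by
    have h1 : S * (A - 1) = A ^ K - 1 := geom_sum_mul A K
    have h2 : (1 - A) * S = M := by
      have h3 : (1 - A) * S = S * (1 - A) := by
        rw [Matrix.sub_mul, Matrix.mul_sub, Matrix.one_mul, Matrix.mul_one, cAS.eq]
      rw [h3, Matrix.mul_sub, Matrix.mul_one, hMdef]
      have := congrArg (fun X => -X) h1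
      simp only [Matrix.mul_sub, Matrix.mul_one, neg_sub] at this
      linear_combination (norm := abel) this
    have h4 : (1 : Matrix (Fin d) (Fin d) ℝ) - A = γ • H := by rw [hAdef, sub_sub_cancel]
    rw [← h2, h4, Matrix.smul_mul]
  have hHS : H * S = γ⁻¹ • M := by
    rw [← hgeom, smul_smul, inv_mul_cancel₀ hγ.ne', one_smul]
  have hS : S = γ⁻¹ • (H⁻¹ * M) := by
    have := congrArg (fun X => H⁻¹ * X) hHS
    simpa [Matrix.mul_smul, ← Matrix.mul_assoc, hHiH] using this
  have hSM : S * M = γ⁻¹ • (H⁻¹ * M * M) := by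
    rw [hS, Matrix.smul_mul]
  -- rewrite key matrix as (M*R)ᵀ * (M*R)
  have hkey : H⁻¹ * M * M = (R * M) * (M * R) := by
    rw [← hRR, Matrix.mul_assoc R R M, cRM.eq, ← Matrix.mul_assoc R M R,
      Matrix.mul_assoc (R*M) R M, cRM.eq]
  -- the vector x
  set x : Fin d → ℝ := R *ᵥ η₀ with hx
  -- compute LHS
  have hsum : ∑ k ∈ Finset.range K, (A ^ k) *ᵥ η₀ = S *ᵥ η₀ := by
    rw [hSdef, sum_mulVec' d K (fun k => A ^ k) η₀]
  rw [hsum]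
  have hLHS : ((K : ℝ)⁻¹ • (S *ᵥ η₀)) ⬝ᵥ (H *ᵥ ((K : ℝ)⁻¹ • (S *ᵥ η₀)))
      = ((γ:ℝ)^2 * (K:ℝ)^2)⁻¹ * ((M *ᵥ x) ⬝ᵥ (M *ᵥ x)) := by
    rw [mulVec_smul, smul_dotProduct, dotProduct_smul]
    have h5 : (S *ᵥ η₀) ⬝ᵥ (H *ᵥ (S *ᵥ η₀)) = γ⁻¹ * γ⁻¹ * ((M *ᵥ x) ⬝ᵥ (M *ᵥ x)) := by
      calc (S *ᵥ η₀) ⬝ᵥ (H *ᵥ (S *ᵥ η₀))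
          = (S *ᵥ η₀) ⬝ᵥ ((H * S) *ᵥ η₀) := by rw [mulVec_mulVec]
        _ = γ⁻¹ * ((S *ᵥ η₀) ⬝ᵥ (M *ᵥ η₀)) := by
            rw [hHS, smul_mulVec, dotProduct_smul, smul_eq_mul]
        _ = γ⁻¹ * (η₀ ⬝ᵥ ((S * M) *ᵥ η₀)) := by
            rw [mulVec_dot, hSsym, mulVec_mulVec]
        _ = γ⁻¹ * (γ⁻¹ * (η₀ ⬝ᵥ ((H⁻¹ * M * M) *ᵥ η₀))) := by
            rw [hSM, smul_mulVec, dotProduct_smul, smul_eq_mul]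
        _ = γ⁻¹ * γ⁻¹ * ((M *ᵥ x) ⬝ᵥ (M *ᵥ x)) := by
            rw [hkey, ← mulVec_mulVec, dot_mulVec']
            rw [transpose_mul, hRsym, hMsym, ← mulVec_mulVec, ← hx, mulVec_mulVec]
            ring
    rw [h5]
    simp only [smul_eq_mul]
    ring
  rw [hLHS, div_eq_inv_mul]
  have hγH : ((γ:ℝ) • H).PosSemidef := by
    constructor
    · simp [Matrix.IsHermitian, conjTranspose_smul, hHsym]
    · intro y
      exact (hH.posSemidef.smul hγ.le).2 y
  have h1A : ((1 : Matrix (Fin d) (Fin d) ℝ) - A).PosSemidef := by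
    rw [hAdef, sub_sub_cancel]; exact hγH
  have hcontr := contraction d K A hI h1A x
  have hpos : (0:ℝ) ≤ (γ ^ 2 * (K:ℝ) ^ 2)⁻¹ := by positivity
  calc (γ ^ 2 * (K:ℝ) ^ 2)⁻¹ * ((M *ᵥ x) ⬝ᵥ (M *ᵥ x))
      ≤ (γ ^ 2 * (K:ℝ) ^ 2)⁻¹ * (x ⬝ᵥ x) := mul_le_mul_of_nonneg_left hcontr hpos
    _ = (γ ^ 2 * (K:ℝ) ^ 2)⁻¹ * (x ⬝ᵥ x) := rfl
end

section
/- Consider N points w_*^1, ..., w_*^N in R^d with mean w_* and a random vector x (per client i.i.d. copies x^i) with E[x⊗x] = H satisfying the kurtosis bound E[⟨z,x⟩⁴] ≤ κ⟨z,Hz⟩² for all z. Let ε be independent noise with E[ε²|x] = σ², and set Θ_i = E[((x⊗x)(w_* − w_*^i) + εx)⊗((x⊗x)(w_* − w_*^i) + εx)]. Then (1/N)Σ_{i=1}^N Θ_i ≼ (κ·Tr(H·Cov(W_*)) + σ²)·H, where Cov(W_*) = (1/N)Σ_i (w_* − w_*^i)⊗(w_* − w_*^i). -/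
open MeasureTheory Matrix ProbabilityTheory

/-- The mean `w_* = (1/N) Σ_i w_*^i` of the client optima. -/
noncomputable def wstar {d N : ℕ} (w : Fin N → Fin d → ℝ) : Fin d → ℝ :=
  fun k => (∑ i, w i k) / N

/-- The deviation `w_* − w_*^i` of client `i`'s optimum from the mean. -/
noncomputable def devi {d N : ℕ} (w : Fin N → Fin d → ℝ) (i : Fin N) : Fin d → ℝ :=
  fun k => wstar w k - w i k

/-- The stochastic gradient at the optimum on client `i`:
`g_i = (x ⊗ x)(w_* − w_*^i) + ε x`, coordinatewise. -/
noncomputable def gradStar {Ω : Type*} {d N : ℕ} (w : Fin N → Fin d → ℝ)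
    (x : Ω → Fin d → ℝ) (ε : Ω → ℝ) (i : Fin N) (ω : Ω) : Fin d → ℝ :=
  fun a => x ω a * (∑ k, x ω k * devi w i k) + ε ω * x ω a

/-- The second-moment matrix `Θ_i = E[g_i ⊗ g_i]`. -/
noncomputable def Theta {Ω : Type*} [MeasurableSpace Ω] (μ : Measure Ω)
    {d N : ℕ} (w : Fin N → Fin d → ℝ) (x : Ω → Fin d → ℝ) (ε : Ω → ℝ) (i : Fin N) :
    Matrix (Fin d) (Fin d) ℝ :=
  Matrix.of fun a b => ∫ ω, gradStar w x ε i ω a * gradStar w x ε i ω b ∂μ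

/-- `Cov(W_*) = (1/N) Σ_i (w_* − w_*^i) ⊗ (w_* − w_*^i)`. -/
noncomputable def covW {d N : ℕ} (w : Fin N → Fin d → ℝ) : Matrix (Fin d) (Fin d) ℝ :=
  Matrix.of fun a b => (∑ i, devi w i a * devi w i b) / N

lemma sq_sum_eq {d : ℕ} (v y : Fin d → ℝ) :
    (∑ a, v a * y a) ^ 2 = ∑ k, ∑ l, (v k * v l) * (y k * y l) := by
  rw [sq, Finset.sum_mul_sum]
  exact Finset.sum_congr rfl fun k _ => Finset.sum_congr rfl fun l _ => by ring

lemma dot_quad {d : ℕ} (M : Matrix (Fin d) (Fin d) ℝ) (z : Fin d → ℝ) :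
    z ⬝ᵥ (M *ᵥ z) = ∑ a, ∑ b, z a * z b * M a b := by
  show (∑ a, z a * ∑ b, M a b * z b) = _
  refine Finset.sum_congr rfl fun a _ => ?_
  rw [Finset.mul_sum]
  exact Finset.sum_congr rfl fun b _ => by ring

lemma dot_sum_quad {ι d : ℕ} (A : Fin ι → Matrix (Fin d) (Fin d) ℝ) (z : Fin d → ℝ) :
    z ⬝ᵥ ((∑ i, A i) *ᵥ z) = ∑ i, z ⬝ᵥ (A i *ᵥ z) := by
  classical
  induction (Finset.univ : Finset (Fin ι)) using Finset.induction with
  | empty => simp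
  | insert _ _ h ih =>
      rw [Finset.sum_insert h, Finset.sum_insert h, Matrix.add_mulVec, dotProduct_add, ih]

lemma integral_quad {Ω : Type*} [MeasurableSpace Ω] (μ : Measure Ω) {d : ℕ} (z : Fin d → ℝ)
    (f : Ω → Fin d → ℝ) (hint : ∀ a b, Integrable (fun ω => f ω a * f ω b) μ) :
    ∫ ω, (∑ a, z a * f ω a) ^ 2 ∂μ
      = ∑ a, ∑ b, z a * z b * ∫ ω, f ω a * f ω b ∂μ := by
  have h : ∀ ω, (∑ a, z a * f ω a) ^ 2
      = ∑ a, ∑ b, (z a * z b) * (f ω a * f ω b) := fun ω => by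
    rw [sq, Finset.sum_mul_sum]
    exact Finset.sum_congr rfl fun a _ => Finset.sum_congr rfl fun b _ => by ring
  simp_rw [h]
  rw [integral_finset_sum _ fun a _ =>
    integrable_finset_sum _ fun b _ => (hint a b).const_mul _]
  refine Finset.sum_congr rfl fun a _ => ?_
  rw [integral_finset_sum _ fun b _ => (hint a b).const_mul _]
  exact Finset.sum_congr rfl fun b _ => integral_const_mul _ _

lemma theta_quad_bound {Ω : Type*} [MeasurableSpace Ω]
    (μ : Measure Ω) [IsProbabilityMeasure μ]
    {d N : ℕ} (w : Fin N → Fin d → ℝ)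
    (x : Ω → Fin d → ℝ) (ε : Ω → ℝ)
    (H : Matrix (Fin d) (Fin d) ℝ) (κ σ : ℝ) (hκ : 0 < κ)
    (hmx : Measurable x) (hmε : Measurable ε)
    (hH : ∀ i j, ∫ ω, x ω i * x ω j ∂μ = H i j)
    (hintH : ∀ i j, Integrable (fun ω => x ω i * x ω j) μ)
    (hint4 : ∀ (z : Fin d → ℝ) (i j : Fin d),
      Integrable (fun ω => (∑ k, z k * x ω k) ^ 2 * (x ω i * x ω j)) μ)
    (hkurt : ∀ z : Fin d → ℝ,
      ∫ ω, (∑ k, z k * x ω k) ^ 4 ∂μ ≤ κ * (z ⬝ᵥ (H *ᵥ z)) ^ 2)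
    (hindep : IndepFun ε x μ)
    (hε0 : ∫ ω, ε ω ∂μ = 0)
    (hε2 : ∫ ω, ε ω ^ 2 ∂μ = σ ^ 2)
    (hintε2 : Integrable (fun ω => ε ω ^ 2) μ)
    (i : Fin N)
    (hintΘ : ∀ a b, Integrable (fun ω => gradStar w x ε i ω a * gradStar w x ε i ω b) μ)
    (z : Fin d → ℝ) :
    z ⬝ᵥ (Theta μ w x ε i *ᵥ z)
      ≤ (κ * (devi w i ⬝ᵥ (H *ᵥ devi w i)) + σ ^ 2) * (z ⬝ᵥ (H *ᵥ z)) := by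
  classical
  set u : Fin d → ℝ := devi w i with hu
  set Sz : Ω → ℝ := fun ω => ∑ a, z a * x ω a with hSz
  set T : Ω → ℝ := fun ω => ∑ k, u k * x ω k with hT
  have mxa : ∀ a, Measurable fun ω => x ω a := fun a => (measurable_pi_apply a).comp hmx
  have mSz : Measurable Sz := Finset.measurable_sum _ fun a _ => (mxa a).const_mul (z a)
  have mT : Measurable T := Finset.measurable_sum _ fun a _ => (mxa a).const_mul (u a)
  -- quadratic form of H as an integral
  have hquadH : ∀ v : Fin d → ℝ, v ⬝ᵥ (H *ᵥ v) = ∫ ω, (∑ a, v a * x ω a) ^ 2 ∂μ := by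
    intro v
    rw [dot_quad, integral_quad μ v x hintH]
    exact Finset.sum_congr rfl fun a _ => Finset.sum_congr rfl fun b _ => by rw [hH]
  have hQz : 0 ≤ z ⬝ᵥ (H *ᵥ z) := by
    rw [hquadH]; exact integral_nonneg fun ω => sq_nonneg _
  have hQu : 0 ≤ u ⬝ᵥ (H *ᵥ u) := by
    rw [hquadH]; exact integral_nonneg fun ω => sq_nonneg _
  -- quadratic form of Theta as an integral
  have hTheta : z ⬝ᵥ (Theta μ w x ε i *ᵥ z)
      = ∫ ω, (∑ a, z a * gradStar w x ε i ω a) ^ 2 ∂μ := by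
    rw [dot_quad, integral_quad μ z _ hintΘ]
    rfl
  -- pointwise formula for the gradient's pairing with z
  have hgrad : ∀ ω, (∑ a, z a * gradStar w x ε i ω a) = Sz ω * T ω + ε ω * Sz ω := by
    intro ω
    have hTc : (∑ k, x ω k * devi w i k) = T ω :=
      Finset.sum_congr rfl fun k _ => mul_comm _ _
    simp only [gradStar, hTc]
    calc ∑ a, z a * (x ω a * T ω + ε ω * x ω a)
        = ∑ a, (z a * x ω a * T ω + ε ω * (z a * x ω a)) :=
          Finset.sum_congr rfl fun a _ => by ring
      _ = Sz ω * T ω + ε ω * Sz ω := by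
          rw [Finset.sum_add_distrib, ← Finset.sum_mul, ← Finset.mul_sum]
  -- integrability facts
  have intSq : ∀ v : Fin d → ℝ, Integrable (fun ω => (∑ a, v a * x ω a) ^ 2) μ := by
    intro v
    have h : Integrable (fun ω => ∑ k, ∑ l, (v k * v l) * (x ω k * x ω l)) μ :=
      integrable_finset_sum _ fun k _ =>
        integrable_finset_sum _ fun l _ => (hintH k l).const_mul _
    exact h.congr (ae_of_all _ fun ω => (sq_sum_eq v (x ω)).symm)
  have intSqMulSq : ∀ v : Fin d → ℝ,
      Integrable (fun ω => Sz ω ^ 2 * (∑ a, v a * x ω a) ^ 2) μ := by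
    intro v
    have h : Integrable
        (fun ω => ∑ k, ∑ l, (v k * v l) * (Sz ω ^ 2 * (x ω k * x ω l))) μ :=
      integrable_finset_sum _ fun k _ =>
        integrable_finset_sum _ fun l _ => ((hint4 z k l).const_mul _)
    refine h.congr (ae_of_all _ fun ω => ?_)
    dsimp only
    rw [sq_sum_eq v (x ω), Finset.mul_sum]
    refine Finset.sum_congr rfl fun k _ => ?_
    rw [Finset.mul_sum]
    exact Finset.sum_congr rfl fun l _ => by ring
  have hSzω : ∀ ω, (∑ a, z a * x ω a) = Sz ω := fun _ => rfl
  have hTω : ∀ ω, (∑ a, u a * x ω a) = T ω := fun _ => rfl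
  have intT4 : Integrable (fun ω => (T ω ^ 2) ^ 2) μ := by
    have h : Integrable
        (fun ω => ∑ k, ∑ l, (u k * u l) * (T ω ^ 2 * (x ω k * x ω l))) μ :=
      integrable_finset_sum _ fun k _ =>
        integrable_finset_sum _ fun l _ => ((hint4 u k l).const_mul _)
    refine h.congr (ae_of_all _ fun ω => ?_)
    dsimp only
    rw [show (T ω ^ 2) ^ 2 = T ω ^ 2 * (∑ a, u a * x ω a) ^ 2 from by rw [hTω]; ring,
      sq_sum_eq u (x ω), Finset.mul_sum]
    refine Finset.sum_congr rfl fun k _ => ?_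
    rw [Finset.mul_sum]
    exact Finset.sum_congr rfl fun l _ => by ring
  have intSz4 : Integrable (fun ω => (Sz ω ^ 2) ^ 2) μ :=
    (intSqMulSq z).congr (ae_of_all _ fun ω => by dsimp only; rw [hSzω]; ring)
  have intA : Integrable (fun ω => Sz ω ^ 2 * T ω ^ 2) μ := intSqMulSq u
  have intTot : Integrable (fun ω => (∑ a, z a * gradStar w x ε i ω a) ^ 2) μ := by
    have h : Integrable (fun ω => ∑ k, ∑ l,
        (z k * z l) * (gradStar w x ε i ω k * gradStar w x ε i ω l)) μ :=
      integrable_finset_sum _ fun k _ =>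
        integrable_finset_sum _ fun l _ => (hintΘ k l).const_mul _
    exact h.congr (ae_of_all _ fun ω => (sq_sum_eq z _).symm)
  have hφm : Measurable fun v : Fin d → ℝ => (∑ a, z a * v a) ^ 2 :=
    (Finset.measurable_sum _ fun a _ =>
      (measurable_pi_apply (X := fun _ : Fin d => ℝ) a).const_mul (z a)).pow_const 2
  have hψm : Measurable fun v : Fin d → ℝ => (∑ a, z a * v a) ^ 2 * (∑ k, u k * v k) :=
    hφm.mul (Finset.measurable_sum _ fun a _ =>
      (measurable_pi_apply (X := fun _ : Fin d => ℝ) a).const_mul (u a))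
  have hi2 : IndepFun (fun ω => ε ω ^ 2) (fun ω => Sz ω ^ 2) μ :=
    hindep.comp (measurable_id.pow_const 2) hφm
  have intC : Integrable (fun ω => ε ω ^ 2 * Sz ω ^ 2) μ :=
    hi2.integrable_mul hintε2 (intSq z)
  have intB : Integrable (fun ω => ε ω * (Sz ω ^ 2 * T ω)) μ := by
    refine (((intTot.sub intA).sub intC).const_mul (1 / 2)).congr
      (ae_of_all _ fun ω => ?_)
    simp only [Pi.sub_apply]
    rw [hgrad ω]; ring
  -- splitting the integral
  have hsplit : ∫ ω, (∑ a, z a * gradStar w x ε i ω a) ^ 2 ∂μ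
      = (∫ ω, Sz ω ^ 2 * T ω ^ 2 ∂μ) + 2 * (∫ ω, ε ω * (Sz ω ^ 2 * T ω) ∂μ)
        + ∫ ω, ε ω ^ 2 * Sz ω ^ 2 ∂μ := by
    have hpt : ∀ ω, (∑ a, z a * gradStar w x ε i ω a) ^ 2
        = Sz ω ^ 2 * T ω ^ 2 + 2 * (ε ω * (Sz ω ^ 2 * T ω)) + ε ω ^ 2 * Sz ω ^ 2 :=
      fun ω => by rw [hgrad ω]; ring
    have I2 : Integrable (fun ω => 2 * (ε ω * (Sz ω ^ 2 * T ω))) μ := intB.const_mul 2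
    have I1 : Integrable
        (fun ω => Sz ω ^ 2 * T ω ^ 2 + 2 * (ε ω * (Sz ω ^ 2 * T ω))) μ := intA.add I2
    simp_rw [hpt]
    rw [integral_add I1 intC, integral_add intA I2, integral_const_mul]
  -- middle term vanishes
  have hmid : ∫ ω, ε ω * (Sz ω ^ 2 * T ω) ∂μ = 0 := by
    have hi : IndepFun ε (fun ω => Sz ω ^ 2 * T ω) μ :=
      hindep.comp measurable_id hψm
    rw [hi.integral_fun_mul_eq_mul_integral hmε.aestronglyMeasurable
      ((hψm.comp hmx).aestronglyMeasurable), hε0, zero_mul]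
  -- last term
  have hlast : ∫ ω, ε ω ^ 2 * Sz ω ^ 2 ∂μ = σ ^ 2 * (z ⬝ᵥ (H *ᵥ z)) := by
    rw [hi2.integral_fun_mul_eq_mul_integral (hmε.pow_const 2).aestronglyMeasurable
      ((hφm.comp hmx).aestronglyMeasurable), hε2, hquadH z]
  -- Cauchy–Schwarz for the first term
  have hCS : ∫ ω, Sz ω ^ 2 * T ω ^ 2 ∂μ
      ≤ κ * (z ⬝ᵥ (H *ᵥ z)) * (u ⬝ᵥ (H *ᵥ u)) := by
    have hconj : Real.HolderConjugate 2 2 := Real.HolderConjugate.two_two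
    have h2 : ENNReal.ofReal (2 : ℝ) = 2 := by norm_num
    have hmem1 : MemLp (fun ω => Sz ω ^ 2) (ENNReal.ofReal (2 : ℝ)) μ := by
      rw [h2]
      exact (memLp_two_iff_integrable_sq
        (mSz.pow_const 2).aestronglyMeasurable).2 intSz4
    have hmem2 : MemLp (fun ω => T ω ^ 2) (ENNReal.ofReal (2 : ℝ)) μ := by
      rw [h2]
      exact (memLp_two_iff_integrable_sq
        (mT.pow_const 2).aestronglyMeasurable).2 intT4
    have hraw := integral_mul_le_Lp_mul_Lq_of_nonneg hconj
      (ae_of_all _ fun ω => sq_nonneg (Sz ω)) (ae_of_all _ fun ω => sq_nonneg (T ω))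
      hmem1 hmem2
    have e1 : ∫ ω, (Sz ω ^ 2) ^ (2 : ℝ) ∂μ = ∫ ω, Sz ω ^ 4 ∂μ := by
      refine integral_congr_ae (ae_of_all _ fun ω => ?_)
      dsimp only
      rw [show ((Sz ω ^ 2) ^ (2 : ℝ) : ℝ) = (Sz ω ^ 2) ^ (2 : ℕ) from by
        rw [← Real.rpow_natCast (Sz ω ^ 2) 2]; norm_num]
      ring
    have e2 : ∫ ω, (T ω ^ 2) ^ (2 : ℝ) ∂μ = ∫ ω, T ω ^ 4 ∂μ := by
      refine integral_congr_ae (ae_of_all _ fun ω => ?_)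
      dsimp only
      rw [show ((T ω ^ 2) ^ (2 : ℝ) : ℝ) = (T ω ^ 2) ^ (2 : ℕ) from by
        rw [← Real.rpow_natCast (T ω ^ 2) 2]; norm_num]
      ring
    rw [e1, e2] at hraw
    have b1 : ∫ ω, Sz ω ^ 4 ∂μ ≤ κ * (z ⬝ᵥ (H *ᵥ z)) ^ 2 := hkurt z
    have b2 : ∫ ω, T ω ^ 4 ∂μ ≤ κ * (u ⬝ᵥ (H *ᵥ u)) ^ 2 := hkurt u
    have i1 : 0 ≤ ∫ ω, Sz ω ^ 4 ∂μ :=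
      integral_nonneg fun ω => by positivity
    have i2 : 0 ≤ ∫ ω, T ω ^ 4 ∂μ :=
      integral_nonneg fun ω => by positivity
    calc ∫ ω, Sz ω ^ 2 * T ω ^ 2 ∂μ
        ≤ (∫ ω, Sz ω ^ 4 ∂μ) ^ (1 / 2 : ℝ) * (∫ ω, T ω ^ 4 ∂μ) ^ (1 / 2 : ℝ) := hraw
      _ ≤ (κ * (z ⬝ᵥ (H *ᵥ z)) ^ 2) ^ (1 / 2 : ℝ)
            * (κ * (u ⬝ᵥ (H *ᵥ u)) ^ 2) ^ (1 / 2 : ℝ) := by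
          apply mul_le_mul (Real.rpow_le_rpow i1 b1 (by norm_num))
            (Real.rpow_le_rpow i2 b2 (by norm_num))
            (Real.rpow_nonneg i2 _)
            (Real.rpow_nonneg (mul_nonneg hκ.le (sq_nonneg _)) _)
      _ = κ * (z ⬝ᵥ (H *ᵥ z)) * (u ⬝ᵥ (H *ᵥ u)) := by
          rw [← Real.sqrt_eq_rpow, ← Real.sqrt_eq_rpow,
            ← Real.sqrt_mul (mul_nonneg hκ.le (sq_nonneg _)),
            show κ * (z ⬝ᵥ (H *ᵥ z)) ^ 2 * (κ * (u ⬝ᵥ (H *ᵥ u)) ^ 2)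
              = (κ * (z ⬝ᵥ (H *ᵥ z)) * (u ⬝ᵥ (H *ᵥ u))) ^ 2 from by ring,
            Real.sqrt_sq (mul_nonneg (mul_nonneg hκ.le hQz) hQu)]
  -- put everything together
  rw [hTheta, hsplit, hmid, hlast]
  have hexp : (κ * (u ⬝ᵥ (H *ᵥ u)) + σ ^ 2) * (z ⬝ᵥ (H *ᵥ z))
      = κ * (z ⬝ᵥ (H *ᵥ z)) * (u ⬝ᵥ (H *ᵥ u)) + σ ^ 2 * (z ⬝ᵥ (H *ᵥ z)) := by ring
  rw [hexp]
  linarith [hCS]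

/-- Impact of client heterogeneity: if `x` has second moment `H` and bounded kurtosis
with constant `κ`, and `ε` is independent zero-mean noise with `E[ε²] = σ²`, then
`(1/N) Σ_i Θ_i ≼ (κ · Tr(H · Cov(W_*)) + σ²) · H` in the Loewner order. -/
theorem client_heterogeneity_bound {Ω : Type*} [MeasurableSpace Ω]
    (μ : Measure Ω) [IsProbabilityMeasure μ]
    (d N : ℕ) (hN : 0 < N) (w : Fin N → Fin d → ℝ)
    (x : Ω → Fin d → ℝ) (ε : Ω → ℝ)
    (H : Matrix (Fin d) (Fin d) ℝ) (κ σ : ℝ) (hκ : 0 < κ)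
    (hmx : Measurable x) (hmε : Measurable ε)
    (hH : ∀ i j, ∫ ω, x ω i * x ω j ∂μ = H i j)
    (hintH : ∀ i j, Integrable (fun ω => x ω i * x ω j) μ)
    (hint4 : ∀ (z : Fin d → ℝ) (i j : Fin d),
      Integrable (fun ω => (∑ k, z k * x ω k) ^ 2 * (x ω i * x ω j)) μ)
    (hkurt : ∀ z : Fin d → ℝ,
      ∫ ω, (∑ k, z k * x ω k) ^ 4 ∂μ ≤ κ * (z ⬝ᵥ (H *ᵥ z)) ^ 2)
    (hindep : IndepFun ε x μ)
    (hε0 : ∫ ω, ε ω ∂μ = 0)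
    (hε2 : ∫ ω, ε ω ^ 2 ∂μ = σ ^ 2)
    (hintε2 : Integrable (fun ω => ε ω ^ 2) μ)
    (hintΘ : ∀ (i : Fin N) (a b : Fin d),
      Integrable (fun ω => gradStar w x ε i ω a * gradStar w x ε i ω b) μ) :
    (((κ * (H * covW w).trace + σ ^ 2) • H)
      - (N : ℝ)⁻¹ • ∑ i, Theta μ w x ε i).PosSemidef := by
  classical
  have hHsym : ∀ a b, H a b = H b a := fun a b => by
    rw [← hH a b, ← hH b a]
    exact integral_congr_ae (ae_of_all _ fun ω => mul_comm _ _)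
  have hΘsym : ∀ (i : Fin N) a b, Theta μ w x ε i a b = Theta μ w x ε i b a :=
    fun i a b => integral_congr_ae (ae_of_all _ fun ω => mul_comm _ _)
  -- trace identity
  have htr : (H * covW w).trace
      = (N : ℝ)⁻¹ * ∑ i, (devi w i ⬝ᵥ (H *ᵥ devi w i)) := by
    have h1 : (H * covW w).trace
        = ∑ a, ∑ b, H a b * ((∑ i, devi w i b * devi w i a) / N) := by
      simp [Matrix.trace, Matrix.diag, Matrix.mul_apply, covW]
    have h2 : ∀ a b : Fin d, H a b * ((∑ i, devi w i b * devi w i a) / N)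
        = ∑ i, (N : ℝ)⁻¹ * (devi w i a * (H a b * devi w i b)) := by
      intro a b
      rw [div_eq_mul_inv, Finset.sum_mul, Finset.mul_sum]
      exact Finset.sum_congr rfl fun i _ => by ring
    rw [h1]
    simp_rw [h2]
    rw [show (∑ a, ∑ b, ∑ i, (N : ℝ)⁻¹ * (devi w i a * (H a b * devi w i b)))
        = ∑ i, ∑ a, ∑ b, (N : ℝ)⁻¹ * (devi w i a * (H a b * devi w i b)) from by
      rw [show (∑ a, ∑ b, ∑ i, (N : ℝ)⁻¹ * (devi w i a * (H a b * devi w i b)))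
          = ∑ a, ∑ i, ∑ b, (N : ℝ)⁻¹ * (devi w i a * (H a b * devi w i b)) from
        Finset.sum_congr rfl fun a _ => Finset.sum_comm]
      exact Finset.sum_comm]
    rw [Finset.mul_sum]
    refine Finset.sum_congr rfl fun i _ => ?_
    rw [dot_quad, Finset.mul_sum]
    refine Finset.sum_congr rfl fun a _ => ?_
    rw [Finset.mul_sum]
    exact Finset.sum_congr rfl fun b _ => by ring
  rw [Matrix.posSemidef_iff_dotProduct_mulVec]
  constructor
  · -- Hermitian part
    refine Matrix.ext fun a b => ?_
    rw [Matrix.conjTranspose_apply]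
    simp only [Matrix.sub_apply, Matrix.smul_apply, Matrix.sum_apply, smul_eq_mul,
      star_trivial]
    rw [hHsym b a]
    congr 1
    congr 1
    exact Finset.sum_congr rfl fun i _ => hΘsym i b a
  · intro z
    have hstar : star z = z := funext fun a => star_trivial _
    rw [hstar, Matrix.sub_mulVec, dotProduct_sub, Matrix.smul_mulVec,
      dotProduct_smul, Matrix.smul_mulVec, dotProduct_smul, dot_sum_quad,
      smul_eq_mul, smul_eq_mul]
    have hquadH : z ⬝ᵥ (H *ᵥ z) = ∫ ω, (∑ a, z a * x ω a) ^ 2 ∂μ := by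
      rw [dot_quad, integral_quad μ z x hintH]
      exact Finset.sum_congr rfl fun a _ => Finset.sum_congr rfl fun b _ => by rw [hH]
    have hQz : 0 ≤ z ⬝ᵥ (H *ᵥ z) := by
      rw [hquadH]; exact integral_nonneg fun ω => sq_nonneg _
    have hb : ∀ i : Fin N, z ⬝ᵥ (Theta μ w x ε i *ᵥ z)
        ≤ (κ * (devi w i ⬝ᵥ (H *ᵥ devi w i)) + σ ^ 2) * (z ⬝ᵥ (H *ᵥ z)) :=
      fun i => theta_quad_bound μ w x ε H κ σ hκ hmx hmε hH hintH hint4 hkurt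
        hindep hε0 hε2 hintε2 i (hintΘ i) z
    have hsum : ∑ i, z ⬝ᵥ (Theta μ w x ε i *ᵥ z)
        ≤ ∑ i, ((κ * (devi w i ⬝ᵥ (H *ᵥ devi w i)) + σ ^ 2) * (z ⬝ᵥ (H *ᵥ z))) :=
      Finset.sum_le_sum fun i _ => hb i
    have hNpos : (0 : ℝ) < N := by exact_mod_cast hN
    have hsum2 : ∑ i, ((κ * (devi w i ⬝ᵥ (H *ᵥ devi w i)) + σ ^ 2) * (z ⬝ᵥ (H *ᵥ z)))
        = κ * (z ⬝ᵥ (H *ᵥ z)) * (∑ i, devi w i ⬝ᵥ (H *ᵥ devi w i))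
          + (N : ℝ) * (σ ^ 2 * (z ⬝ᵥ (H *ᵥ z))) := by
      rw [Finset.mul_sum,
        show ((N : ℝ) * (σ ^ 2 * (z ⬝ᵥ (H *ᵥ z))))
          = ∑ _i : Fin N, σ ^ 2 * (z ⬝ᵥ (H *ᵥ z)) from by
            rw [Finset.sum_const, Finset.card_univ, Fintype.card_fin, nsmul_eq_mul],
        ← Finset.sum_add_distrib]
      exact Finset.sum_congr rfl fun i _ => by ring
    have key : (N : ℝ)⁻¹
          * ∑ i, ((κ * (devi w i ⬝ᵥ (H *ᵥ devi w i)) + σ ^ 2) * (z ⬝ᵥ (H *ᵥ z)))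
        = (κ * (H * covW w).trace + σ ^ 2) * (z ⬝ᵥ (H *ᵥ z)) := by
      rw [hsum2, htr]
      field_simp
    have hmono : (N : ℝ)⁻¹ * ∑ i, z ⬝ᵥ (Theta μ w x ε i *ᵥ z)
        ≤ (N : ℝ)⁻¹
          * ∑ i, ((κ * (devi w i ⬝ᵥ (H *ᵥ devi w i)) + σ ^ 2) * (z ⬝ᵥ (H *ᵥ z))) :=
      mul_le_mul_of_nonneg_left hsum (by positivity)
    linarith [key, hmono]
end
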